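/- Let Q be an NQPR in dimension d ≥ 2. Then every eigenvalue of every Q_j is at least −((d−1)√(d+1) − 1)/d. Equivalently, the negativity N(Q) = −min_j λ_min(Q_j) satisfies N(Q) ≤ ((d−1)√(d+1) − 1)/d. -/

import Mathlib

open Finset Matrix

/-- For any NQPR `Q` in dimension `d ≥ 2`, every eigenvalue of every `Q j` is at
least `−((d−1)√(d+1) − 1)/d`. -/
theorem stmt_4 (d : ℕ) (hd : 2 ≤ d)
    (Q : Fin (d ^ 2) → Matrix (Fin d) (Fin d) ℂ)
    (hherm : ∀ j, (Q j).IsHermitian)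
    (htr : ∀ j, (Q j).trace = 1)
    (hpair : ∀ j k, (Q j * Q k).trace = if j = k then (d : ℂ) else 0)
    (hsum : ∑ j, Q j = (d : ℂ) • (1 : Matrix (Fin d) (Fin d) ℂ)) :
    ∀ j i, -((((d : ℝ) - 1) * Real.sqrt (d + 1) - 1) / d) ≤ (hherm j).eigenvalues i := by
  intro j i
  classical
  set lam : ℝ := (hherm j).eigenvalues i with hlam
  set v : Fin d → ℂ := ⇑((hherm j).eigenvectorBasis i) with hv
  have hvec : Q j *ᵥ v = lam • v := (hherm j).mulVec_eigenvectorBasis i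
  have hconj : ∀ k a b, (starRingEnd ℂ) (Q k a b) = Q k b a := by
    intro k a b
    conv_rhs => rw [← hherm k]
    simp [Matrix.conjTranspose_apply]
  have hnorm : ∑ a, (starRingEnd ℂ) (v a) * v a = 1 := by
    have h := orthonormal_iff_ite.mp ((hherm j).eigenvectorBasis.orthonormal) i i
    simp only [if_pos rfl, PiLp.inner_apply, RCLike.inner_apply', ↓reduceIte] at h
    exact h
  set c : Fin (d ^ 2) → ℂ := fun k => dotProduct (star v) (Q k *ᵥ v) with hcdef
  have hdot1 : dotProduct (star v) v = 1 := by
    simpa [dotProduct, Pi.star_apply, Complex.star_def] using hnorm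
  have hsum_c : ∑ k, c k = (d : ℂ) := by
    have h1 : (∑ k, Q k) *ᵥ v = (d : ℂ) • v := by
      rw [hsum, Matrix.smul_mulVec, Matrix.one_mulVec]
    calc ∑ k, c k = dotProduct (star v) (∑ k, Q k *ᵥ v) := by
          rw [hcdef]
          simp only [dotProduct, Finset.sum_apply, Finset.mul_sum]
          rw [Finset.sum_comm]
      _ = dotProduct (star v) ((∑ k, Q k) *ᵥ v) := by
          congr 1
          ext a
          simp only [Matrix.mulVec, dotProduct, Finset.sum_apply, Matrix.sum_apply,
            Finset.sum_mul]
          rw [Finset.sum_comm]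
      _ = (d : ℂ) := by rw [h1, dotProduct_smul, hdot1, smul_eq_mul, mul_one]
  have hcj : c j = (lam : ℂ) := by
    rw [hcdef]
    simp only [hvec]
    calc dotProduct (star v) (lam • v) = lam • dotProduct (star v) v := by
          simp only [dotProduct, Pi.smul_apply, Finset.smul_sum, Pi.star_apply,
            Complex.star_def, Complex.real_smul, smul_eq_mul]
          exact Finset.sum_congr rfl fun a _ => by ring
      _ = (lam : ℂ) := by rw [hdot1]; simp [Complex.real_smul]
  have hreal : ∀ k, c k = ((c k).re : ℂ) := by
    intro k
    rw [eq_comm, ← Complex.conj_eq_iff_re]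
    calc (starRingEnd ℂ) (c k)
        = ∑ a, ∑ b, v a * (Q k b a * (starRingEnd ℂ) (v b)) := by
          simp only [hcdef, dotProduct, Matrix.mulVec, map_sum, Pi.star_apply,
            Complex.star_def]
          exact Finset.sum_congr rfl fun a _ => by
            rw [_root_.map_mul, map_sum, Complex.conj_conj, Finset.mul_sum]
            exact Finset.sum_congr rfl fun b _ => by
              simp only [_root_.map_mul, hconj]
      _ = c k := by
          rw [Finset.sum_comm]
          simp only [hcdef, dotProduct, Matrix.mulVec, Finset.mul_sum, Pi.star_apply,
            Complex.star_def]
          exact Finset.sum_congr rfl fun a _ =>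
            Finset.sum_congr rfl fun b _ => by ring
  set xr : Fin (d ^ 2) → ℝ := fun k => (c k).re with hxrdef
  have hxsum : ∑ k, xr k = (d : ℝ) := by
    have h := congrArg Complex.re hsum_c
    simpa [Complex.re_sum] using h
  have hxj : xr j = lam := by
    have h := congrArg Complex.re hcj
    simpa using h
  have hd0 : (0 : ℝ) < d := by positivity
  have hxsq : ∑ k, xr k ^ 2 ≤ (d : ℝ) := by
    set sd : ℝ := Real.sqrt d with hsd
    have hsd0 : 0 < sd := Real.sqrt_pos.mpr hd0
    have hsd2 : sd ^ 2 = d := Real.sq_sqrt hd0.le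
    set g : Fin (d ^ 2) → EuclideanSpace ℂ (Fin d × Fin d) :=
      fun k => WithLp.toLp 2 (fun p : Fin d × Fin d => ((sd : ℂ))⁻¹ * Q k p.1 p.2) with hg
    have htr2 : ∀ k l, ∑ p : Fin d × Fin d, (starRingEnd ℂ) (Q k p.1 p.2) * Q l p.1 p.2
        = if k = l then (d : ℂ) else 0 := by
      intro k l
      rw [← hpair k l, Matrix.trace]
      rw [Fintype.sum_prod_type]
      rw [Finset.sum_comm]
      simp only [Matrix.diag, Matrix.mul_apply, hconj]
      try exact Finset.sum_congr rfl fun a _ => Finset.sum_congr rfl fun b _ => mul_comm _ _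
    have hortho : Orthonormal ℂ g := by
      rw [orthonormal_iff_ite]
      intro k l
      rw [PiLp.inner_apply]
      simp only [RCLike.inner_apply', hg, PiLp.toLp_apply, _root_.map_mul, map_inv₀, Complex.conj_ofReal]
      have : ∑ p : Fin d × Fin d,
          ((sd : ℂ))⁻¹ * (starRingEnd ℂ) (Q k p.1 p.2) * (((sd : ℂ))⁻¹ * Q l p.1 p.2)
          = ((sd : ℂ))⁻¹ ^ 2 * ∑ p : Fin d × Fin d,
            (starRingEnd ℂ) (Q k p.1 p.2) * Q l p.1 p.2 := by
        rw [Finset.mul_sum]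
        exact Finset.sum_congr rfl fun p _ => by ring
      rw [this, htr2 k l]
      have hsdc : ((sd : ℂ)) ^ 2 = (d : ℂ) := by
        rw [← Complex.ofReal_pow, hsd2]; simp
      by_cases hkl : k = l
      · subst hkl
        rw [if_pos rfl, if_pos rfl, inv_pow, ← hsdc]
        exact inv_mul_cancel₀ (pow_ne_zero 2 (by exact_mod_cast hsd0.ne'))
      · simp [hkl]
    set x : EuclideanSpace ℂ (Fin d × Fin d) := WithLp.toLp 2 (fun p : Fin d × Fin d => v p.1 * (starRingEnd ℂ) (v p.2)) with hx
    have hxnorm : ‖x‖ ^ 2 = 1 := by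
      rw [← inner_self_eq_norm_sq (𝕜 := ℂ)]
      have : inner ℂ x x = 1 := by
        rw [PiLp.inner_apply]
        simp only [RCLike.inner_apply', hx, PiLp.toLp_apply, _root_.map_mul, Complex.conj_conj]
        rw [Fintype.sum_prod_type]
        have : ∀ a : Fin d, ∑ b : Fin d,
            (starRingEnd ℂ) (v a) * v b * (v a * (starRingEnd ℂ) (v b))
            = ((starRingEnd ℂ) (v a) * v a) * ∑ b, (starRingEnd ℂ) (v b) * v b := by
          intro a
          rw [Finset.mul_sum]
          exact Finset.sum_congr rfl fun b _ => by ring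
        simp only [this, hnorm, mul_one]
        try exact hnorm
      rw [this]; simp
    have hgx : ∀ k, inner ℂ (g k) x = ((sd : ℂ))⁻¹ * c k := by
      intro k
      have hck2 : ∑ a : Fin d, ∑ b : Fin d, Q k b a * (v a * (starRingEnd ℂ) (v b)) = c k := by
        rw [Finset.sum_comm, hcdef]
        simp only [dotProduct, Matrix.mulVec, Pi.star_apply, Complex.star_def]
        exact Finset.sum_congr rfl fun b _ => by
          rw [Finset.mul_sum]
          exact Finset.sum_congr rfl fun a _ => by ring
      rw [PiLp.inner_apply]
      simp only [RCLike.inner_apply', hg, hx, PiLp.toLp_apply, _root_.map_mul, map_inv₀, Complex.conj_ofReal, hconj]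
      rw [Fintype.sum_prod_type]
      rw [← hck2, Finset.mul_sum]
      exact Finset.sum_congr rfl fun a _ => by
        rw [Finset.mul_sum]
        exact Finset.sum_congr rfl fun b _ => by ring
    have hb := hortho.sum_inner_products_le (s := Finset.univ) x
    rw [hxnorm] at hb
    have hterm : ∀ k, ‖inner ℂ (g k) x‖ ^ 2 = xr k ^ 2 / d := by
      intro k
      rw [hgx k, norm_mul]
      rw [hreal k]
      simp only [norm_inv, Complex.norm_real, Real.norm_eq_abs]
      rw [abs_of_pos hsd0]
      rw [mul_pow, sq_abs, inv_pow, hsd2]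
      rw [div_eq_inv_mul]
    rw [Finset.sum_congr rfl (fun k _ => hterm k)] at hb
    rw [← Finset.sum_div] at hb
    rw [div_le_one hd0] at hb
    exact hb

  -- final arithmetic
  set s : ℝ := Real.sqrt (d + 1) with hs
  have hs0 : 0 ≤ s := Real.sqrt_nonneg _
  have hs2 : s ^ 2 = (d : ℝ) + 1 := Real.sq_sqrt (by positivity)
  have hd2 : (2 : ℝ) ≤ d := by exact_mod_cast hd
  have hs1 : 1 ≤ s := by nlinarith [hs2, hs0]
  have hjmem : j ∈ (Finset.univ : Finset (Fin (d ^ 2))) := Finset.mem_univ j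
  have hsum_e : ∑ k ∈ Finset.univ.erase j, xr k = (d : ℝ) - lam := by
    rw [Finset.sum_erase_eq_sub hjmem, hxsum, hxj]
  have hsq_e : ∑ k ∈ Finset.univ.erase j, xr k ^ 2 ≤ (d : ℝ) - lam ^ 2 := by
    rw [Finset.sum_erase_eq_sub hjmem, hxj]
    linarith [hxsq]
  have hCS := sq_sum_le_card_mul_sum_sq (s := Finset.univ.erase j) (f := xr)
  have hcard : ((Finset.univ.erase j).card : ℝ) = (d : ℝ) ^ 2 - 1 := by
    rw [Finset.card_erase_of_mem hjmem]
    simp only [Finset.card_univ, Fintype.card_fin]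
    have h1 : 1 ≤ d ^ 2 := by nlinarith [hd]
    push_cast [Nat.cast_sub h1]
    ring
  rw [hsum_e, hcard] at hCS
  have hsqe_nonneg : (0:ℝ) ≤ ∑ k ∈ Finset.univ.erase j, xr k ^ 2 :=
    Finset.sum_nonneg fun k _ => sq_nonneg _
  have hmain : ((d : ℝ) - lam) ^ 2 ≤ ((d : ℝ) ^ 2 - 1) * ((d : ℝ) - lam ^ 2) := by
    calc ((d : ℝ) - lam) ^ 2 ≤ ((d : ℝ) ^ 2 - 1) * ∑ k ∈ Finset.univ.erase j, xr k ^ 2 := hCS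
      _ ≤ ((d : ℝ) ^ 2 - 1) * ((d : ℝ) - lam ^ 2) := by
          apply mul_le_mul_of_nonneg_left hsq_e
          nlinarith [hd2]
  have hbpos : (1 : ℝ) ≤ ((d : ℝ) - 1) * s := by nlinarith [hs1, hd2]
  have hb2 : (((d : ℝ) - 1) * s) ^ 2 = ((d : ℝ) - 1) ^ 2 * ((d : ℝ) + 1) := by
    rw [mul_pow, hs2]
  have hab : ((d : ℝ) * lam - 1) ^ 2 ≤ (((d : ℝ) - 1) * s) ^ 2 := by
    rw [hb2]; nlinarith [hmain]
  have key : 1 - ((d : ℝ) - 1) * s ≤ (d : ℝ) * lam := by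
    have h := (abs_le_of_sq_le_sq' hab (by linarith [hbpos])).1
    linarith [h]
  rw [show -((((d : ℝ) - 1) * s - 1) / d) = (1 - ((d : ℝ) - 1) * s) / d by ring,
    div_le_iff₀ hd0]
  linarith [key]
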